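/- If H and M are disjoint vertex sets in a tournament T such that T − H is acyclic and every M-block in T − H has size at most b, and C is the set of vertices inconsistent with M in T, then C ⊆ H, and every M-block of T − C has size at most |H| + b. -/

import Mathlib

/-- The `M`-blocks of the subgraph of `G` induced on `W` (for `M ⊆ W`). -/
def blocksIn {V : Type*} (G : V → V → Prop) (W : Set V) (M : Set V) : Set (Set V) :=
  {B | ∃ u ∈ M, ∃ w ∈ M, G u w ∧ (∀ x ∈ M, ¬ (G u x ∧ G x w)) ∧
      B = {x | x ∈ W ∧ G u x ∧ G x w}} ∪
  {B | ∃ u ∈ M, (∀ x ∈ M, ¬ G x u) ∧ B = {x | x ∈ W ∧ G x u}} ∪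
  {B | ∃ w ∈ M, (∀ x ∈ M, ¬ G w x) ∧ B = {x | x ∈ W ∧ G w x}}

lemma block_aux {V : Type*} [Fintype V] (H C : Set V) (P : V → Prop) (b : ℕ)
    (h : Set.ncard {x | x ∈ Hᶜ ∧ P x} ≤ b) :
    Set.ncard {x | x ∈ Cᶜ ∧ P x} ≤ H.ncard + b := by
  have hsub : {x | x ∈ Cᶜ ∧ P x} ⊆ H ∪ {x | x ∈ Hᶜ ∧ P x} := by
    intro x hx
    by_cases hxH : x ∈ H
    · exact Or.inl hxH
    · exact Or.inr ⟨hxH, hx.2⟩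
  calc Set.ncard {x | x ∈ Cᶜ ∧ P x}
      ≤ (H ∪ {x | x ∈ Hᶜ ∧ P x}).ncard := Set.ncard_le_ncard hsub (Set.toFinite _)
    _ ≤ H.ncard + Set.ncard {x | x ∈ Hᶜ ∧ P x} := Set.ncard_union_le _ _
    _ ≤ H.ncard + b := by omega

/-- If `H` and `M` are disjoint, `T − H` is acyclic, and every `M`-block of `T − H` has size
at most `b`, then the set `C` of vertices inconsistent with `M` satisfies `C ⊆ H`, and every
`M`-block of `T − C` has size at most `|H| + b`. -/
theorem inconsistent_subset_and_blocks_bound {V : Type*} [Fintype V] (G : V → V → Prop)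
    (hirr : ∀ x, ¬ G x x)
    (htour : ∀ u v : V, u ≠ v → (G u v ↔ ¬ G v u))
    (M H : Set V) (hdisj : Disjoint M H)
    (hHfvs : ∀ x, ¬ Relation.TransGen (fun a b => a ∉ H ∧ b ∉ H ∧ G a b) x x)
    (b : ℕ)
    (hblocks : ∀ B ∈ blocksIn G Hᶜ M, B.ncard ≤ b) :
    {v : V | Relation.TransGen
        (fun a b => a ∈ M ∪ {v} ∧ b ∈ M ∪ {v} ∧ G a b) v v} ⊆ H ∧
    ∀ B ∈ blocksIn G
        ({v : V | Relation.TransGen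
          (fun a b => a ∈ M ∪ {v} ∧ b ∈ M ∪ {v} ∧ G a b) v v})ᶜ M,
      B.ncard ≤ H.ncard + b := by
  have hMH : ∀ x ∈ M, x ∉ H := fun x hx => Set.disjoint_left.mp hdisj hx
  constructor
  · intro v hv
    by_contra hvH
    apply hHfvs v
    refine Relation.TransGen.mono ?_ v v hv
    rintro a c ⟨ha, hc, hG⟩
    refine ⟨?_, ?_, hG⟩
    · rcases ha with ha | ha
      · exact hMH a ha
      · rw [Set.mem_singleton_iff] at ha; subst ha; exact hvH
    · rcases hc with hc | hc
      · exact hMH c hc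
      · rw [Set.mem_singleton_iff] at hc; subst hc; exact hvH
  · intro B hB
    rcases hB with (⟨u, hu, w, hw, hG, hcons, rfl⟩ | ⟨u, hu, hcons, rfl⟩) | ⟨w, hw, hcons, rfl⟩
    · exact block_aux H _ _ b
        (hblocks _ (Or.inl (Or.inl ⟨u, hu, w, hw, hG, hcons, rfl⟩)))
    · exact block_aux H _ _ b
        (hblocks _ (Or.inl (Or.inr ⟨u, hu, hcons, rfl⟩)))
    · exact block_aux H _ _ b
        (hblocks _ (Or.inr ⟨w, hw, hcons, rfl⟩))
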